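/- Let k ≥ 2, let U ⊆ 𝔽₂^k be a linear subspace of dimension k−2, let z = s+2 with 0 ≤ s ≤ n−3 and z of the same parity as n, and let a, h₁,…,h_k be Boolean functions on 𝔽₂ⁿ such that for every ω ∈ U^⊥ the function g_ω = a ⊕ ω·(h₁,…,h_k) is z-plateaued on 𝔽₂ⁿ, and these functions have pairwise disjoint spectra, i.e. W_{g_ω}(v)·W_{g_{ω'}}(v) = 0 for all v ∈ 𝔽₂ⁿ and all distinct ω, ω' ∈ U^⊥. Set 𝔣(x) = a(x) ⊕ φ_U(h₁(x),…,h_k(x)). Then: (i) if z > 2, 𝔣 is an s-plateaued function on 𝔽₂ⁿ; (ii) if n is even and z = 2, 𝔣 is a bent function on 𝔽₂ⁿ. -/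

import Mathlib

open Finset

def dotp {ι : Type*} [Fintype ι] (a b : ι → ZMod 2) : ZMod 2 := ∑ i, a i * b i

def WHT {ι : Type*} [Fintype ι] [DecidableEq ι]
    (f : (ι → ZMod 2) → ZMod 2) (ω : ι → ZMod 2) : ℤ :=
  ∑ x : ι → ZMod 2, (-1 : ℤ) ^ ((f x + dotp ω x).val)

def IsBent {ι : Type*} [Fintype ι] [DecidableEq ι] (f : (ι → ZMod 2) → ZMod 2) : Prop :=
  ∀ ω, |WHT f ω| = 2 ^ (Fintype.card ι / 2)

def IsDualBent {ι : Type*} [Fintype ι] [DecidableEq ι] (f g : (ι → ZMod 2) → ZMod 2) : Prop :=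
  ∀ ω, WHT f ω = 2 ^ (Fintype.card ι / 2) * (-1 : ℤ) ^ ((g ω).val)

def IsPlateaued {ι : Type*} [Fintype ι] [DecidableEq ι] (s : ℕ) (f : (ι → ZMod 2) → ZMod 2) : Prop :=
  ∀ ω, WHT f ω = 0 ∨ WHT f ω = 2 ^ ((Fintype.card ι + s) / 2) ∨
    WHT f ω = -(2 ^ ((Fintype.card ι + s) / 2))

def WSupport {ι : Type*} [Fintype ι] [DecidableEq ι] (f : (ι → ZMod 2) → ZMod 2) : Set (ι → ZMod 2) :=
  {ω | WHT f ω ≠ 0}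

open scoped Classical

section helpers

variable {ι : Type*} [Fintype ι] [DecidableEq ι]

lemma dotp_add_left (a b y : ι → ZMod 2) : dotp (a + b) y = dotp a y + dotp b y := by
  simp [dotp, add_mul, Finset.sum_add_distrib]

lemma dotp_add_right (y a b : ι → ZMod 2) : dotp y (a + b) = dotp y a + dotp y b := by
  simp [dotp, mul_add, Finset.sum_add_distrib]

lemma dotp_comm (a b : ι → ZMod 2) : dotp a b = dotp b a := by
  simp [dotp, mul_comm]

lemma dotp_zero_left (y : ι → ZMod 2) : dotp 0 y = 0 := by simp [dotp]
lemma dotp_zero_right (y : ι → ZMod 2) : dotp y 0 = 0 := by simp [dotp]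

lemma neg_one_pow_add (p q : ZMod 2) :
    ((-1:ℤ))^((p+q).val) = (-1)^p.val * (-1)^q.val := by revert p q; decide

lemma zmod2_ne_zero {p : ZMod 2} (hp : p ≠ 0) : p = 1 := by revert hp; revert p; decide

lemma sum_char_zero (S : Finset (ι → ZMod 2))
    (hadd : ∀ w ∈ S, ∀ w' ∈ S, w + w' ∈ S) (y : ι → ZMod 2)
    (w₀ : ι → ZMod 2) (hw₀ : w₀ ∈ S) (hy : dotp w₀ y = 1) :
    ∑ w ∈ S, (-1:ℤ)^((dotp w y).val) = 0 := by
  refine Finset.sum_involution (fun w _ => w + w₀) ?_ ?_ (fun w hw => hadd w hw w₀ hw₀) ?_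
  · intro w hw
    have h1 : dotp (w + w₀) y = dotp w y + 1 := by rw [dotp_add_left, hy]
    rw [h1, neg_one_pow_add]
    have : ((1 : ZMod 2)).val = 1 := rfl
    rw [this]; ring
  · intro w hw hne hc
    have hw0 : w₀ = 0 := by
      have := hc
      rwa [add_eq_left] at this
    rw [hw0, dotp_zero_left] at hy
    exact one_ne_zero hy.symm
  · intro w hw
    funext i
    have h2 : w₀ i + w₀ i = 0 := CharTwo.add_self_eq_zero _
    show (w i + w₀ i) + w₀ i = w i
    rw [add_assoc, h2, add_zero]

lemma charsum_univ_ne (z : ι → ZMod 2) (hz : z ≠ 0) :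
    ∑ v : ι → ZMod 2, (-1:ℤ)^((dotp v z).val) = 0 := by
  obtain ⟨i, hi⟩ : ∃ i, z i ≠ 0 := by
    by_contra hc; push_neg at hc; exact hz (funext hc)
  refine sum_char_zero Finset.univ (by simp) z (Pi.single i 1) (Finset.mem_univ _) ?_
  have h1 : dotp (Pi.single i 1) z = z i := by
    rw [dotp]
    rw [Finset.sum_eq_single i]
    · simp
    · intro j _ hj; simp [Pi.single_eq_of_ne hj]
    · simp
  rw [h1, zmod2_ne_zero hi]

lemma charsum_univ (z : ι → ZMod 2) :
    ∑ v : ι → ZMod 2, (-1:ℤ)^((dotp v z).val)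
      = if z = 0 then (2:ℤ)^(Fintype.card ι) else 0 := by
  by_cases hz : z = 0
  · subst hz
    simp [dotp_zero_right, Finset.card_univ, Fintype.card_fun]
  · rw [if_neg hz]; exact charsum_univ_ne z hz

lemma count_dual (S : Finset (ι → ZMod 2)) (h0 : (0 : ι → ZMod 2) ∈ S)
    (hadd : ∀ w ∈ S, ∀ w' ∈ S, w + w' ∈ S) :
    ((Finset.univ.filter (fun y : ι → ZMod 2 => ∀ w ∈ S, dotp w y = 0)).card) * S.card
      = 2 ^ (Fintype.card ι) := by
  have key : ∑ y : ι → ZMod 2, ∑ w ∈ S, (-1:ℤ)^((dotp w y).val)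
      = 2 ^ (Fintype.card ι) := by
    rw [Finset.sum_comm]
    rw [Finset.sum_eq_single (0 : ι → ZMod 2)]
    · simp [dotp_zero_left, Finset.card_univ, Fintype.card_fun]
    · intro w _ hwne
      have : ∀ y : ι → ZMod 2, dotp w y = dotp y w := fun y => dotp_comm w y
      simp_rw [this]
      exact charsum_univ_ne w hwne
    · intro hc; exact absurd h0 hc
  have key2 : ∑ y : ι → ZMod 2, ∑ w ∈ S, (-1:ℤ)^((dotp w y).val)
      = ((Finset.univ.filter (fun y : ι → ZMod 2 => ∀ w ∈ S, dotp w y = 0)).card : ℤ)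
        * S.card := by
    rw [← Finset.sum_filter_add_sum_filter_not Finset.univ
      (fun y : ι → ZMod 2 => ∀ w ∈ S, dotp w y = 0)]
    have h1 : ∑ y ∈ Finset.univ.filter (fun y : ι → ZMod 2 => ∀ w ∈ S, dotp w y = 0),
        ∑ w ∈ S, (-1:ℤ)^((dotp w y).val)
        = ∑ _y ∈ Finset.univ.filter (fun y : ι → ZMod 2 => ∀ w ∈ S, dotp w y = 0),
            (S.card : ℤ) := by
      apply Finset.sum_congr rfl
      intro y hy
      rw [Finset.mem_filter] at hy
      rw [Finset.sum_congr rfl (fun w hw => by rw [hy.2 w hw])]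
      simp
    have h2 : ∑ y ∈ Finset.univ.filter (fun y : ι → ZMod 2 => ¬ ∀ w ∈ S, dotp w y = 0),
        ∑ w ∈ S, (-1:ℤ)^((dotp w y).val) = 0 := by
      apply Finset.sum_eq_zero
      intro y hy
      rw [Finset.mem_filter] at hy
      push_neg at hy
      obtain ⟨w₀, hw₀S, hw₀⟩ := hy.2
      exact sum_char_zero S hadd y w₀ hw₀S (zmod2_ne_zero hw₀)
    rw [h1, h2, add_zero, Finset.sum_const]
    push_cast
    ring
  rw [key2] at key
  exact_mod_cast key

lemma pi_add_self (x : ι → ZMod 2) : x + x = 0 :=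
  funext fun i => CharTwo.add_self_eq_zero _

lemma parseval (f : (ι → ZMod 2) → ZMod 2) :
    ∑ v : ι → ZMod 2, (WHT f v)^2 = 2 ^ (2 * Fintype.card ι) := by
  have hsq : ∀ v, (WHT f v)^2 = ∑ x : ι → ZMod 2, ∑ y : ι → ZMod 2,
      ((-1:ℤ)^((f x).val) * (-1)^((f y).val)) * (-1)^((dotp v (x + y)).val) := by
    intro v
    rw [WHT, sq, Finset.sum_mul_sum]
    apply Finset.sum_congr rfl; intro x _
    apply Finset.sum_congr rfl; intro y _
    rw [neg_one_pow_add, neg_one_pow_add, dotp_add_right, neg_one_pow_add]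
    ring
  simp_rw [hsq]
  rw [Finset.sum_comm]
  have hmid : ∀ x : ι → ZMod 2, ∑ v : ι → ZMod 2, ∑ y : ι → ZMod 2,
      ((-1:ℤ)^((f x).val) * (-1)^((f y).val)) * (-1)^((dotp v (x+y)).val)
      = 2 ^ (Fintype.card ι) := by
    intro x
    rw [Finset.sum_comm]
    have inner : ∀ y : ι → ZMod 2,
        ∑ v : ι → ZMod 2,
          ((-1:ℤ)^((f x).val) * (-1)^((f y).val)) * (-1)^((dotp v (x+y)).val)
        = ((-1:ℤ)^((f x).val) * (-1)^((f y).val)) *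
            (if x + y = 0 then (2:ℤ)^(Fintype.card ι) else 0) := by
      intro y
      rw [← Finset.mul_sum, charsum_univ]
    simp_rw [inner]
    rw [Finset.sum_eq_single x]
    · rw [if_pos (pi_add_self x), ← mul_pow]
      norm_num
    · intro y _ hyx
      have hne : ¬ (x + y = 0) := by
        intro hc
        have h2 : y = -x := (neg_eq_of_add_eq_zero_right hc).symm
        apply hyx
        rw [h2]
        funext i
        exact CharTwo.neg_eq _
      simp [hne]
    · simp
  simp_rw [hmid]
  rw [Finset.sum_const, Finset.card_univ, Fintype.card_fun]
  simp [two_mul, pow_add]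

end helpers

lemma count_dual' {ι : Type*} [Fintype ι] [DecidableEq ι]
    (S T : Finset (ι → ZMod 2)) (h0 : (0 : ι → ZMod 2) ∈ S)
    (hadd : ∀ w ∈ S, ∀ w' ∈ S, w + w' ∈ S)
    (hT : ∀ y, y ∈ T ↔ ∀ w ∈ S, dotp w y = 0) :
    T.card * S.card = 2 ^ (Fintype.card ι) := by
  have hTe : T = Finset.univ.filter (fun y : ι → ZMod 2 => ∀ w ∈ S, dotp w y = 0) :=
    Finset.ext fun y => by simp [Finset.mem_filter, hT y]
  rw [hTe]; exact count_dual S h0 hadd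

lemma main_identity {n k : ℕ}
    (U : Submodule (ZMod 2) (Fin k → ZMod 2))
    (Vf : Finset (Fin k → ZMod 2))
    (hkey : ∀ y : Fin k → ZMod 2,
      (∑ w ∈ Vf, (-1:ℤ)^((dotp w y).val)) = if y ∈ U then 4 else 0)
    (a : (Fin n → ZMod 2) → ZMod 2) (h : Fin k → (Fin n → ZMod 2) → ZMod 2)
    (v : Fin n → ZMod 2) :
    2 * WHT (fun x => a x + (if (fun i => h i x) ∈ U then (1:ZMod 2) else 0)) v
      = 2 * WHT (fun x => a x) v
        - ∑ w ∈ Vf, WHT (fun x => a x + dotp w (fun i => h i x)) v := by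
  simp only [WHT]
  rw [Finset.mul_sum, Finset.mul_sum, Finset.sum_comm, ← Finset.sum_sub_distrib]
  apply Finset.sum_congr rfl
  intro x _
  simp only [neg_one_pow_add]
  have hsum : ∑ w ∈ Vf,
      ((-1:ℤ)^((a x).val) * (-1)^((dotp w (fun i => h i x)).val) * (-1)^((dotp v x).val))
      = ((-1:ℤ)^((a x).val) * (-1)^((dotp v x).val)) *
          (if (fun i => h i x) ∈ U then 4 else 0) := by
    rw [← hkey (fun i => h i x), Finset.mul_sum]
    apply Finset.sum_congr rfl
    intro w _
    ring
  rw [hsum]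
  by_cases hm : (fun i => h i x) ∈ U
  · rw [if_pos hm, if_pos hm]
    have h1 : ((1 : ZMod 2)).val = 1 := rfl
    rw [h1]
    ring
  · rw [if_neg hm, if_neg hm]
    have h0 : ((0 : ZMod 2)).val = 0 := rfl
    rw [h0]
    ring

open scoped Classical in
/-- with `U ⊆ 𝔽₂^k` a subspace of dimension `k-2` (`k ≥ 2`),
`z = s+2` with `0 ≤ s ≤ n-3` and `z ≡ n (mod 2)`, and the functions
`g_ω = a ⊕ ω·(h₁,…,h_k)` pairwise disjoint spectra `z`-plateaued on `𝔽₂^n` for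
`ω ∈ U^⊥`, the function `𝔣 = a ⊕ φ_U(h₁,…,h_k)` is `s`-plateaued when `z > 2`,
and bent when `n` is even and `z = 2`. -/
theorem stmt18 {n k s : ℕ} (hk : 2 ≤ k) (hn : 3 ≤ n) (hs : s ≤ n - 3)
    (hpar : (s + 2) % 2 = n % 2)
    (U : Submodule (ZMod 2) (Fin k → ZMod 2))
    (hdim : Module.finrank (ZMod 2) U = k - 2)
    (a : (Fin n → ZMod 2) → ZMod 2) (h : Fin k → (Fin n → ZMod 2) → ZMod 2)
    (hplat : ∀ w : Fin k → ZMod 2, (∀ u ∈ U, dotp u w = 0) →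
      IsPlateaued (s + 2) (fun x => a x + dotp w (fun i => h i x)))
    (hdisj : ∀ w w' : Fin k → ZMod 2, (∀ u ∈ U, dotp u w = 0) →
      (∀ u ∈ U, dotp u w' = 0) → w ≠ w' →
      ∀ v : Fin n → ZMod 2,
        WHT (fun x => a x + dotp w (fun i => h i x)) v *
          WHT (fun x => a x + dotp w' (fun i => h i x)) v = 0) :
    (2 < s + 2 →
      IsPlateaued s (fun x : Fin n → ZMod 2 =>
        a x + (if (fun i => h i x) ∈ U then (1 : ZMod 2) else 0))) ∧
    (Even n → s + 2 = 2 →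
      IsBent (fun x : Fin n → ZMod 2 =>
        a x + (if (fun i => h i x) ∈ U then (1 : ZMod 2) else 0))) := by
  classical
  have hcard : Fintype.card (Fin n) = n := Fintype.card_fin n
  set Uf : Finset (Fin k → ZMod 2) := Finset.univ.filter (fun u => u ∈ U) with hUfdef
  have hUmem : ∀ u : Fin k → ZMod 2, u ∈ Uf ↔ u ∈ U := by
    intro u; simp [hUfdef]
  set Vf : Finset (Fin k → ZMod 2) :=
    Finset.univ.filter (fun y => ∀ u ∈ U, dotp u y = 0) with hVfdef
  have hVmem : ∀ y : Fin k → ZMod 2, y ∈ Vf ↔ ∀ u ∈ U, dotp u y = 0 := by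
    intro y; simp [hVfdef]
  set Wf : Finset (Fin k → ZMod 2) :=
    Finset.univ.filter (fun y => ∀ w ∈ Vf, dotp w y = 0) with hWfdef
  have hWmem : ∀ y : Fin k → ZMod 2, y ∈ Wf ↔ ∀ w ∈ Vf, dotp w y = 0 := by
    intro y; simp [hWfdef]
  have h0U : (0 : Fin k → ZMod 2) ∈ Uf := (hUmem 0).2 U.zero_mem
  have haddU : ∀ w ∈ Uf, ∀ w' ∈ Uf, w + w' ∈ Uf := by
    intro w hw w' hw'
    exact (hUmem _).2 (U.add_mem ((hUmem w).1 hw) ((hUmem w').1 hw'))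
  have h0V : (0 : Fin k → ZMod 2) ∈ Vf :=
    (hVmem 0).2 (fun u _ => dotp_zero_right u)
  have haddV : ∀ w ∈ Vf, ∀ w' ∈ Vf, w + w' ∈ Vf := by
    intro w hw w' hw'
    refine (hVmem _).2 (fun u hu => ?_)
    rw [dotp_add_right, (hVmem w).1 hw u hu, (hVmem w').1 hw' u hu, add_zero]
  have hUcard : Uf.card = 2 ^ (k - 2) := by
    have h1 : Uf.card = Fintype.card U := by
      rw [Fintype.card_subtype]
    rw [h1, Module.card_eq_pow_finrank (K := ZMod 2), hdim, ZMod.card]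
  have hVU : Vf.card * Uf.card = 2 ^ k := by
    have := count_dual' Uf Vf h0U haddU (fun y => by
      rw [hVmem]
      constructor
      · intro hy w hw; exact hy w ((hUmem w).1 hw)
      · intro hy u hu; exact hy u ((hUmem u).2 hu))
    rwa [Fintype.card_fin] at this
  have hpow : (2:ℕ) ^ k = 4 * 2 ^ (k - 2) := by
    rw [show (4:ℕ) = 2^2 from rfl, ← pow_add]
    congr 1
    omega

  have hVcard : Vf.card = 4 := by
    rw [hUcard] at hVU
    have hpos : 0 < (2:ℕ) ^ (k - 2) := Nat.pow_pos (by norm_num)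
    apply Nat.eq_of_mul_eq_mul_right hpos
    rw [hVU, hpow]
  have hWV : Wf.card * Vf.card = 2 ^ k := by
    have := count_dual' Vf Wf h0V haddV hWmem
    rwa [Fintype.card_fin] at this
  have hWcard : Wf.card = 2 ^ (k - 2) := by
    rw [hVcard] at hWV
    have hpos : (0:ℕ) < 4 := by norm_num
    apply Nat.eq_of_mul_eq_mul_right hpos
    rw [hWV, hpow]
    ring
  have hUsubW : Uf ⊆ Wf := by
    intro u hu
    refine (hWmem u).2 (fun w hw => ?_)
    rw [dotp_comm]
    exact (hVmem w).1 hw u ((hUmem u).1 hu)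
  have hUeqW : Uf = Wf :=
    Finset.eq_of_subset_of_card_le hUsubW (by rw [hWcard, hUcard])
  have hkeyU : ∀ y : Fin k → ZMod 2,
      (∑ w ∈ Vf, (-1:ℤ)^((dotp w y).val)) = if y ∈ U then 4 else 0 := by
    intro y
    by_cases hy : y ∈ U
    · rw [if_pos hy]
      have hone : ∀ w ∈ Vf, (-1:ℤ)^((dotp w y).val) = 1 := by
        intro w hw
        rw [dotp_comm, (hVmem w).1 hw y hy]
        rfl
      rw [Finset.sum_congr rfl hone, Finset.sum_const, hVcard]
      norm_num
    · rw [if_neg hy]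
      have hyW : y ∉ Wf := by
        rw [← hUeqW]
        intro hc
        exact hy ((hUmem y).1 hc)
      obtain ⟨w₀, hw₀, hne⟩ : ∃ w ∈ Vf, dotp w y ≠ 0 := by
        by_contra hc
        push_neg at hc
        exact hyW ((hWmem y).2 hc)
      exact sum_char_zero Vf haddV y w₀ hw₀ (zmod2_ne_zero hne)
  have hmain : ∀ v : Fin n → ZMod 2,
      2 * WHT (fun x => a x + (if (fun i => h i x) ∈ U then (1:ZMod 2) else 0)) v
        = 2 * WHT (fun x => a x) v
          - ∑ w ∈ Vf, WHT (fun x => a x + dotp w (fun i => h i x)) v :=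
    fun v => main_identity U Vf hkeyU a h v
  have hF0 : ∀ v : Fin n → ZMod 2, WHT (fun x => a x) v
      = WHT (fun x => a x + dotp (0 : Fin k → ZMod 2) (fun i => h i x)) v := by
    intro v
    simp only [dotp_zero_left, add_zero]
  have hspec : ∀ v : Fin n → ZMod 2,
      WHT (fun x => a x + (if (fun i => h i x) ∈ U then (1:ZMod 2) else 0)) v = 0 ∨
      WHT (fun x => a x + (if (fun i => h i x) ∈ U then (1:ZMod 2) else 0)) v
        = 2 ^ ((n + s) / 2) ∨
      WHT (fun x => a x + (if (fun i => h i x) ∈ U then (1:ZMod 2) else 0)) v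
        = -(2 ^ ((n + s) / 2)) := by
    intro v
    set T := Vf.filter
      (fun w => WHT (fun x => a x + dotp w (fun i => h i x)) v ≠ 0) with hTdef
    have hsumT : ∑ w ∈ T, WHT (fun x => a x + dotp w (fun i => h i x)) v
        = ∑ w ∈ Vf, WHT (fun x => a x + dotp w (fun i => h i x)) v :=
      Finset.sum_filter_of_ne (fun w _ hne => hne)
    have huniq : ∀ w ∈ T, ∀ w' ∈ T, w = w' := by
      intro w hw w' hw'
      by_contra hne
      rw [hTdef, Finset.mem_filter] at hw hw'
      exact absurd (hdisj w w' ((hVmem w).1 hw.1) ((hVmem w').1 hw'.1) hne v)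
        (mul_ne_zero hw.2 hw'.2)
    have hexp2 : (n + (s + 2)) / 2 = (n + s) / 2 + 1 := by omega
    rcases Finset.eq_empty_or_nonempty T with hTe | ⟨w₁, hw₁⟩
    · left
      have h00 : WHT (fun x => a x + dotp (0 : Fin k → ZMod 2) (fun i => h i x)) v
          = 0 := by
        by_contra hne
        have hmem : (0 : Fin k → ZMod 2) ∈ T := by
          rw [hTdef, Finset.mem_filter]
          exact ⟨h0V, hne⟩
        rw [hTe] at hmem
        exact absurd hmem (Finset.notMem_empty _)
      have hsum0 : ∑ w ∈ Vf, WHT (fun x => a x + dotp w (fun i => h i x)) v = 0 := by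
        rw [← hsumT, hTe, Finset.sum_empty]
      have hm := hmain v
      rw [hsum0, hF0 v, h00] at hm
      linarith
    · have hTs : T = {w₁} :=
        Finset.eq_singleton_iff_unique_mem.2 ⟨hw₁, fun w hw => huniq w hw w₁ hw₁⟩
      rw [hTdef, Finset.mem_filter] at hw₁
      obtain ⟨hw₁V, hw₁ne⟩ := hw₁
      have hsum1 : ∑ w ∈ Vf, WHT (fun x => a x + dotp w (fun i => h i x)) v
          = WHT (fun x => a x + dotp w₁ (fun i => h i x)) v := by
        rw [← hsumT, hTs, Finset.sum_singleton]
      have hpl := hplat w₁ ((hVmem w₁).1 hw₁V) v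
      rw [hcard] at hpl
      have hm := hmain v
      rw [hsum1] at hm
      by_cases hw0 : w₁ = 0
      · subst hw0
        rw [hF0 v] at hm
        rcases hpl with hc | hc | hc
        · exact absurd hc hw₁ne
        · right; left
          rw [hc, hexp2, pow_succ] at hm
          linarith
        · right; right
          rw [hc, hexp2, pow_succ] at hm
          linarith
      · have h00 : WHT (fun x => a x + dotp (0 : Fin k → ZMod 2) (fun i => h i x)) v
            = 0 := by
          by_contra hne
          have hmem : (0 : Fin k → ZMod 2) ∈ T := by
            rw [hTdef, Finset.mem_filter]
            exact ⟨h0V, hne⟩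
          rw [hTs, Finset.mem_singleton] at hmem
          exact hw0 hmem.symm
        rw [hF0 v, h00] at hm
        rcases hpl with hc | hc | hc
        · exact absurd hc hw₁ne
        · right; right
          rw [hc, hexp2, pow_succ] at hm
          linarith
        · right; left
          rw [hc, hexp2, pow_succ] at hm
          linarith
  constructor
  · intro _
    intro ω
    simp only [hcard]
    exact hspec ω
  · intro hev hz
    obtain rfl : s = 0 := by omega
    have hn2 : n / 2 * 2 = n := Nat.div_mul_cancel hev.two_dvd
    have hbound : ∀ v : Fin n → ZMod 2,
        (WHT (fun x => a x + (if (fun i => h i x) ∈ U then (1:ZMod 2) else 0)) v) ^ 2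
          ≤ 2 ^ n := by
      intro v
      rcases hspec v with hc | hc | hc
      · rw [hc]
        positivity
      · rw [hc, ← pow_mul, Nat.add_zero, hn2]
      · rw [hc, neg_pow, ← pow_mul, Nat.add_zero, hn2]
        nlinarith [pow_pos (by norm_num : (0:ℤ) < 2) n]
    intro ω
    have hnz : WHT (fun x => a x + (if (fun i => h i x) ∈ U then (1:ZMod 2) else 0)) ω
        ≠ 0 := by
      intro h0
      have hps := parseval (fun x => a x + (if (fun i => h i x) ∈ U then (1:ZMod 2) else 0))
      rw [hcard] at hps
      rw [← Finset.add_sum_erase _ _ (Finset.mem_univ ω), h0] at hps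
      have hle : ∑ v ∈ Finset.univ.erase ω,
          (WHT (fun x => a x + (if (fun i => h i x) ∈ U then (1:ZMod 2) else 0)) v) ^ 2
          ≤ ((Finset.univ.erase ω).card : ℤ) * 2 ^ n := by
        have := Finset.sum_le_card_nsmul (Finset.univ.erase ω)
          (fun v => (WHT (fun x => a x + (if (fun i => h i x) ∈ U then (1:ZMod 2) else 0)) v) ^ 2)
          (2 ^ n) (fun v _ => hbound v)
        simpa [nsmul_eq_mul] using this
      have hcarderase : (Finset.univ.erase ω).card = 2 ^ n - 1 := by
        rw [Finset.card_erase_of_mem (Finset.mem_univ ω), Finset.card_univ,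
          Fintype.card_fun, ZMod.card, Fintype.card_fin]
      rw [hcarderase] at hle
      have hcast : (((2:ℕ) ^ n - 1 : ℕ) : ℤ) = 2 ^ n - 1 := by
        have h1 : (1:ℕ) ≤ 2 ^ n := Nat.one_le_two_pow
        push_cast [h1]
        ring
      rw [hcast] at hle
      have h2n : (2:ℤ) ^ (2 * n) = 2 ^ n * 2 ^ n := by
        rw [two_mul, pow_add]
      nlinarith [pow_pos (by norm_num : (0:ℤ) < 2) n]
    rcases hspec ω with hc | hc | hc
    · exact absurd hc hnz
    · rw [hc, hcard, Nat.add_zero]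
      rw [abs_of_nonneg (by positivity)]
    · rw [hc, hcard, Nat.add_zero, abs_neg]
      rw [abs_of_nonneg (by positivity)]
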